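/- Let n ≥ 3. Then |M| = d_n · Σ_{j=1}^{n−1} d_j · ∏_{1 ≤ i ≤ n−1, i ≠ j} a_i. -/

import Mathlib

open Finset

/-- The set `A`: lattice points `v ∈ ℤ^(m+1)` with `-dᵢ < vᵢ ≤ aᵢ` for all `i`, and for all
pairs `i < j` with `j` not the last index, `dⱼ(vᵢ - aᵢ) ≤ dᵢ vⱼ` and `dᵢ vⱼ < dⱼ vᵢ + dᵢ aⱼ`. -/
def setA (m : ℕ) (a d : Fin (m + 1) → ℤ) : Set (Fin (m + 1) → ℤ) :=
  {v | (∀ i, -d i < v i ∧ v i ≤ a i) ∧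
    ∀ i j : Fin (m + 1), i < j → j ≠ Fin.last m →
      d j * (v i - a i) ≤ d i * v j ∧ d i * v j < d j * v i + d i * a j}

/-- The set `M`: elements `v` of `A` with `aₙ - dₙ < vₙ ≤ aₙ` and some non-last index `i`
with `-dᵢ < vᵢ ≤ 0`. -/
def setM (m : ℕ) (a d : Fin (m + 1) → ℤ) : Set (Fin (m + 1) → ℤ) :=
  {v | v ∈ setA m a d ∧ (a (Fin.last m) - d (Fin.last m) < v (Fin.last m) ∧
      v (Fin.last m) ≤ a (Fin.last m)) ∧
    ∃ i : Fin (m + 1), i ≠ Fin.last m ∧ -d i < v i ∧ v i ≤ 0}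

/-- The set `T`: elements `v` of `M` such that every non-last index `j` satisfies
`dⱼ vₙ < dₙ vⱼ + dⱼ aₙ`. -/
def setT (m : ℕ) (a d : Fin (m + 1) → ℤ) : Set (Fin (m + 1) → ℤ) :=
  {v | v ∈ setM m a d ∧ ∀ j : Fin (m + 1), j ≠ Fin.last m →
    d j * v (Fin.last m) < d (Fin.last m) * v j + d j * a (Fin.last m)}

lemma ztrans_le_le {p q r x y z : ℤ} (hp : 0 < p) (hq : 0 < q) (hr : 0 < r)
    (h1 : q * x ≤ p * y) (h2 : r * y ≤ q * z) : r * x ≤ p * z := by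
  have h1' := mul_le_mul_of_nonneg_left h1 hr.le
  have h2' := mul_le_mul_of_nonneg_left h2 hp.le
  have h3 : q * (r * x) ≤ q * (p * z) := by nlinarith
  exact le_of_mul_le_mul_left h3 hq

lemma ztrans_le_lt {p q r x y z : ℤ} (hp : 0 < p) (hq : 0 < q) (hr : 0 < r)
    (h1 : q * x ≤ p * y) (h2 : r * y < q * z) : r * x < p * z := by
  have h1' := mul_le_mul_of_nonneg_left h1 hr.le
  have h2' := mul_lt_mul_of_pos_left h2 hp
  have h3 : q * (r * x) < q * (p * z) := by nlinarith
  exact lt_of_mul_lt_mul_left h3 hq.le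

lemma ztrans_lt_le {p q r x y z : ℤ} (hp : 0 < p) (hq : 0 < q) (hr : 0 < r)
    (h1 : q * x < p * y) (h2 : r * y ≤ q * z) : r * x < p * z := by
  have h1' := mul_lt_mul_of_pos_left h1 hr
  have h2' := mul_le_mul_of_nonneg_left h2 hp.le
  have h3 : q * (r * x) < q * (p * z) := by nlinarith
  exact lt_of_mul_lt_mul_left h3 hq.le

lemma qdiv_le_iff {p q x y : ℤ} (hp : 0 < p) (hq : 0 < q) :
    (x : ℚ) / (p : ℚ) ≤ (y : ℚ) / (q : ℚ) ↔ q * x ≤ p * y := by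
  rw [div_le_div_iff₀ (by exact_mod_cast hp) (by exact_mod_cast hq)]
  constructor
  · intro h
    have h' : x * q ≤ y * p := by exact_mod_cast h
    linarith
  · intro h
    have h' : x * q ≤ y * p := by linarith
    exact_mod_cast h'

lemma qdiv_lt_iff {p q x y : ℤ} (hp : 0 < p) (hq : 0 < q) :
    (x : ℚ) / (p : ℚ) < (y : ℚ) / (q : ℚ) ↔ q * x < p * y := by
  rw [div_lt_div_iff₀ (by exact_mod_cast hp) (by exact_mod_cast hq)]
  constructor
  · intro h
    have h' : x * q < y * p := by exact_mod_cast h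
    linarith
  · intro h
    have h' : x * q < y * p := by linarith
    exact_mod_cast h'


def goodM (m : ℕ) (a d : Fin (m + 1) → ℤ) (j : Fin m) (v : Fin (m + 1) → ℤ) : Prop :=
  (a (Fin.last m) - d (Fin.last m) < v (Fin.last m) ∧ v (Fin.last m) ≤ a (Fin.last m)) ∧
  (-d j.castSucc < v j.castSucc ∧ v j.castSucc ≤ 0) ∧
  ∀ i : Fin m, i ≠ j →
    if i < j then
      d i.castSucc * v j.castSucc < d j.castSucc * v i.castSucc ∧
      d j.castSucc * v i.castSucc ≤ d i.castSucc * v j.castSucc + d j.castSucc * a i.castSucc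
    else
      d i.castSucc * v j.castSucc ≤ d j.castSucc * v i.castSucc ∧
      d j.castSucc * v i.castSucc < d i.castSucc * v j.castSucc + d j.castSucc * a i.castSucc

lemma goodM_unique (m : ℕ) (a d : Fin (m + 1) → ℤ) {j k : Fin m} {v : Fin (m + 1) → ℤ}
    (hj : goodM m a d j v) (hk : goodM m a d k v) : j = k := by
  by_contra hne
  rcases lt_or_gt_of_ne hne with h | h
  · have h1 := hj.2.2 k (ne_of_gt h)
    have h2 := hk.2.2 j (ne_of_lt h)
    rw [if_neg (not_lt.mpr h.le)] at h1
    rw [if_pos h] at h2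
    linarith [h1.1, h2.1]
  · have h1 := hj.2.2 k (ne_of_lt h)
    have h2 := hk.2.2 j (ne_of_gt h)
    rw [if_pos h] at h1
    rw [if_neg (not_lt.mpr h.le)] at h2
    linarith [h1.1, h2.1]

lemma setM_iff_good (m : ℕ) (a d : Fin (m + 1) → ℤ) (ha : ∀ i, 0 < a i) (hd : ∀ i, 0 < d i)
    (v : Fin (m + 1) → ℤ) : v ∈ setM m a d ↔ ∃ j : Fin m, goodM m a d j v := by
  constructor
  · rintro ⟨⟨hb, hp⟩, hlast, i0, hi0ne, hi0lb, hi0ub⟩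
    obtain ⟨i1, rfl⟩ := Fin.exists_castSucc_eq.mpr hi0ne
    obtain ⟨j, -, hjmin⟩ := Finset.exists_min_image (univ : Finset (Fin m))
      (fun i => toLex (((v i.castSucc : ℚ) / (d i.castSucc : ℚ)), i)) ⟨i1, mem_univ _⟩
    have hw : ∀ i : Fin m,
        (v j.castSucc : ℚ) / (d j.castSucc : ℚ) ≤ (v i.castSucc : ℚ) / (d i.castSucc : ℚ) := by
      intro i
      rcases Prod.Lex.le_iff.mp (hjmin i (mem_univ i)) with h | h
      · exact h.le
      · exact le_of_eq h.1
    have hwz : ∀ i : Fin m, d i.castSucc * v j.castSucc ≤ d j.castSucc * v i.castSucc :=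
      fun i => (qdiv_le_iff (hd j.castSucc) (hd i.castSucc)).mp (hw i)
    have hs : ∀ i : Fin m, i < j →
        d i.castSucc * v j.castSucc < d j.castSucc * v i.castSucc := by
      intro i hij
      rcases Prod.Lex.le_iff.mp (hjmin i (mem_univ i)) with h | h
      · exact (qdiv_lt_iff (hd j.castSucc) (hd i.castSucc)).mp h
      · exact absurd h.2 (not_le.mpr hij)
    refine ⟨j, hlast, ⟨(hb j.castSucc).1, ?_⟩, ?_⟩
    · have h1 := hwz i1
      have h2 : d j.castSucc * v i1.castSucc ≤ d j.castSucc * 0 :=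
        mul_nonpos_of_nonneg_of_nonpos (hd _).le hi0ub |>.trans_eq (by ring)
      have h3 : d i1.castSucc * v j.castSucc ≤ d i1.castSucc * 0 := by
        rw [mul_zero]; nlinarith
      exact le_of_mul_le_mul_left h3 (hd i1.castSucc)
    · intro i hij
      rcases lt_or_gt_of_ne hij with h | h
      · rw [if_pos h]
        refine ⟨hs i h, ?_⟩
        have := (hp i.castSucc j.castSucc (by rwa [Fin.castSucc_lt_castSucc_iff])
          (Fin.castSucc_lt_last j).ne).1
        linarith
      · rw [if_neg (not_lt.mpr h.le)]
        refine ⟨hwz i, ?_⟩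
        exact (hp j.castSucc i.castSucc (by rwa [Fin.castSucc_lt_castSucc_iff])
          (Fin.castSucc_lt_last i).ne).2
  · rintro ⟨j, hlast, hvj, hcond⟩
    have w1 : ∀ i : Fin m, i ≠ j →
        d i.castSucc * v j.castSucc ≤ d j.castSucc * v i.castSucc := by
      intro i hi
      have := hcond i hi
      split_ifs at this with h
      · exact this.1.le
      · exact this.1
    have w2 : ∀ i : Fin m, i ≠ j →
        d j.castSucc * v i.castSucc ≤ d i.castSucc * v j.castSucc + d j.castSucc * a i.castSucc := by
      intro i hi
      have := hcond i hi
      split_ifs at this with h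
      · exact this.2
      · exact this.2.le
    have s1 : ∀ i : Fin m, i < j →
        d i.castSucc * v j.castSucc < d j.castSucc * v i.castSucc := by
      intro i hi
      have := hcond i (ne_of_lt hi)
      rw [if_pos hi] at this
      exact this.1
    have s2 : ∀ i : Fin m, j < i →
        d j.castSucc * v i.castSucc < d i.castSucc * v j.castSucc + d j.castSucc * a i.castSucc := by
      intro i hi
      have := hcond i (ne_of_gt hi)
      rw [if_neg (not_lt.mpr hi.le)] at this
      exact this.2
    have hbounds : ∀ k, -d k < v k ∧ v k ≤ a k := by
      intro k
      by_cases hkl : k = Fin.last m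
      · subst hkl
        exact ⟨by linarith [hlast.1, ha (Fin.last m)], hlast.2⟩
      · obtain ⟨i, rfl⟩ := Fin.exists_castSucc_eq.mpr hkl
        by_cases hij : i = j
        · subst hij
          exact ⟨hvj.1, hvj.2.trans (ha i.castSucc).le⟩
        · constructor
          · have h1 := mul_lt_mul_of_pos_left hvj.1 (hd i.castSucc)
            have h2 := w1 i hij
            have h3 : d j.castSucc * (-d i.castSucc) < d j.castSucc * v i.castSucc := by nlinarith
            exact lt_of_mul_lt_mul_left h3 (hd j.castSucc).le
          · have h1 := w2 i hij
            have h2 : d i.castSucc * v j.castSucc ≤ 0 :=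
              mul_nonpos_of_nonneg_of_nonpos (hd _).le hvj.2
            have h3 : d j.castSucc * v i.castSucc ≤ d j.castSucc * a i.castSucc := by linarith
            exact le_of_mul_le_mul_left h3 (hd j.castSucc)
    refine ⟨⟨hbounds, ?_⟩, hlast, j.castSucc, (Fin.castSucc_lt_last j).ne, hvj⟩
    intro p q hpq hql
    obtain ⟨k, rfl⟩ := Fin.exists_castSucc_eq.mpr hql
    have hpl : p ≠ Fin.last m := ne_of_lt (hpq.trans (Fin.castSucc_lt_last k))
    obtain ⟨i, rfl⟩ := Fin.exists_castSucc_eq.mpr hpl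
    have hik : i < k := by rwa [Fin.castSucc_lt_castSucc_iff] at hpq
    by_cases hij : i = j
    · subst hij
      have hkj : i ≠ k := ne_of_lt hik
      constructor
      · have h1 : d i.castSucc * (v i.castSucc - a i.castSucc) ≤ d i.castSucc * v i.castSucc := by
          nlinarith [ha i.castSucc, hd i.castSucc]
        have h2 := w1 k (ne_of_gt hik)
        have := ztrans_le_le (hd i.castSucc) (hd i.castSucc) (hd k.castSucc) h1 h2
        linarith
      · have := s2 k hik
        linarith
    · by_cases hkj : k = j
      · subst hkj
        have hij' : i < k := hik
        constructor
        · have := w2 i hij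
          linarith
        · have h1 : d k.castSucc * (v k.castSucc - a k.castSucc) < d k.castSucc * v k.castSucc := by
            nlinarith [ha k.castSucc, hd k.castSucc]
          have h2 := (s1 i hik).le
          have := ztrans_lt_le (hd k.castSucc) (hd k.castSucc) (hd i.castSucc) h1 h2
          linarith
      · constructor
        · have h1 : d j.castSucc * (v i.castSucc - a i.castSucc) ≤ d i.castSucc * v j.castSucc := by
            have := w2 i hij; linarith
          have h2 := w1 k hkj
          have := ztrans_le_le (hd i.castSucc) (hd j.castSucc) (hd k.castSucc) h1 h2
          linarith
        · rcases lt_or_gt_of_ne hkj with h | h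
          · have h1 : d j.castSucc * (v k.castSucc - a k.castSucc) ≤ d k.castSucc * v j.castSucc := by
              have := w2 k hkj; linarith
            have h2 := s1 i (hik.trans h)
            have := ztrans_le_lt (hd k.castSucc) (hd j.castSucc) (hd i.castSucc) h1 h2
            linarith
          · have h1 : d j.castSucc * (v k.castSucc - a k.castSucc) < d k.castSucc * v j.castSucc := by
              have := s2 k h; linarith
            have h2 := w1 i hij
            have := ztrans_lt_le (hd k.castSucc) (hd j.castSucc) (hd i.castSucc) h1 h2
            linarith

def offM (m : ℕ) (d : Fin (m + 1) → ℤ) (j : Fin m) (k : Fin (m + 1)) (t : ℤ) : ℤ :=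
  if (k : ℕ) < (j : ℕ) then (d k * t) / (d j.castSucc)
  else -((-(d k * t)) / (d j.castSucc)) - 1

def phiM (m : ℕ) (d : Fin (m + 1) → ℤ) (j : Fin m) (u : Fin (m + 1) → ℤ) : Fin (m + 1) → ℤ :=
  fun k => if k = Fin.last m ∨ k = j.castSucc then u k
    else u k + offM m d j k (u j.castSucc)

noncomputable def boxM (m : ℕ) (a d : Fin (m + 1) → ℤ) (j : Fin m) : Finset (Fin (m + 1) → ℤ) :=
  Fintype.piFinset fun k =>
    if k = Fin.last m then Finset.Icc (a k - d k + 1) (a k)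
    else if k = j.castSucc then Finset.Icc (1 - d k) 0
    else Finset.Icc 1 (a k)

lemma phiM_inj (m : ℕ) (d : Fin (m + 1) → ℤ) (j : Fin m) :
    Function.Injective (phiM m d j) := by
  intro u u' h
  have hj : u j.castSucc = u' j.castSucc := by
    have := congrFun h j.castSucc
    simpa [phiM] using this
  funext k
  by_cases hk : k = Fin.last m ∨ k = j.castSucc
  · have := congrFun h k
    simpa [phiM, if_pos hk] using this
  · have := congrFun h k
    simp only [phiM, if_neg hk, hj] at this
    linarith

lemma mem_SBM (m : ℕ) (a d : Fin (m + 1) → ℤ) (ha : ∀ i, 0 < a i) (hd : ∀ i, 0 < d i)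
    (j : Fin m) (v : Fin (m + 1) → ℤ) :
    v ∈ (boxM m a d j).image (phiM m d j) ↔ goodM m a d j v := by
  have hDpos : 0 < d j.castSucc := hd j.castSucc
  have hDne : d j.castSucc ≠ 0 := ne_of_gt hDpos
  have hjl : j.castSucc ≠ Fin.last m := (Fin.castSucc_lt_last j).ne
  constructor
  · intro hv
    obtain ⟨u, hu, rfl⟩ := Finset.mem_image.mp hv
    rw [boxM, Fintype.mem_piFinset] at hu
    have hvL : phiM m d j u (Fin.last m) = u (Fin.last m) := by simp [phiM]
    have hvJ : phiM m d j u j.castSucc = u j.castSucc := by simp [phiM]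
    have huL := hu (Fin.last m)
    rw [if_pos rfl, Finset.mem_Icc] at huL
    have huJ := hu j.castSucc
    rw [if_neg hjl, if_pos rfl, Finset.mem_Icc] at huJ
    refine ⟨⟨by rw [hvL]; omega, by rw [hvL]; exact huL.2⟩,
      ⟨by rw [hvJ]; omega, by rw [hvJ]; exact huJ.2⟩, ?_⟩
    intro i hi
    have hil : i.castSucc ≠ Fin.last m := (Fin.castSucc_lt_last i).ne
    have hijc : i.castSucc ≠ j.castSucc := fun h => hi (Fin.castSucc_injective m h)
    have hvi : phiM m d j u i.castSucc
        = u i.castSucc + offM m d j i.castSucc (u j.castSucc) := by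
      simp [phiM, hil, hijc]
    have hui := hu i.castSucc
    rw [if_neg hil, if_neg hijc, Finset.mem_Icc] at hui
    set t := u j.castSucc with ht
    by_cases hij : i < j
    · rw [if_pos hij]
      have hc : ((i.castSucc : Fin (m + 1)) : ℕ) < (j : ℕ) := by
        rw [Fin.coe_castSucc]; exact hij
      have hoff : offM m d j i.castSucc t = (d i.castSucc * t) / (d j.castSucc) := by
        rw [offM, if_pos hc]
      have key := Int.mul_ediv_add_emod (d i.castSucc * t) (d j.castSucc)
      have hr0 := Int.emod_nonneg (d i.castSucc * t) hDne
      have hrlt := Int.emod_lt_of_pos (d i.castSucc * t) hDpos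
      have hb1 := mul_le_mul_of_nonneg_left hui.1 hDpos.le
      have hb2 := mul_le_mul_of_nonneg_left hui.2 hDpos.le
      rw [hvL, hvJ, hvi, hoff] at *
      constructor
      · nlinarith
      · nlinarith
    · rw [if_neg hij]
      have hc : ¬ ((i.castSucc : Fin (m + 1)) : ℕ) < (j : ℕ) := by
        rw [Fin.coe_castSucc]; exact hij
      have hoff : offM m d j i.castSucc t
          = -((-(d i.castSucc * t)) / (d j.castSucc)) - 1 := by
        rw [offM, if_neg hc]
      have key := Int.mul_ediv_add_emod (-(d i.castSucc * t)) (d j.castSucc)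
      have hr0 := Int.emod_nonneg (-(d i.castSucc * t)) hDne
      have hrlt := Int.emod_lt_of_pos (-(d i.castSucc * t)) hDpos
      have hb1 := mul_le_mul_of_nonneg_left hui.1 hDpos.le
      have hb2 := mul_le_mul_of_nonneg_left hui.2 hDpos.le
      rw [hvL, hvJ, hvi, hoff] at *
      constructor
      · nlinarith
      · nlinarith
  · intro hg
    obtain ⟨hlast, hvj, hcond⟩ := hg
    refine Finset.mem_image.mpr
      ⟨fun k => if k = Fin.last m ∨ k = j.castSucc then v k
        else v k - offM m d j k (v j.castSucc), ?_, ?_⟩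
    · rw [boxM, Fintype.mem_piFinset]
      intro k
      by_cases hkL : k = Fin.last m
      · subst hkL
        rw [if_pos (Or.inl rfl), if_pos rfl, Finset.mem_Icc]
        omega
      · by_cases hkJ : k = j.castSucc
        · subst hkJ
          rw [if_pos (Or.inr rfl), if_neg hjl, if_pos rfl, Finset.mem_Icc]
          omega
        · obtain ⟨i, rfl⟩ := Fin.exists_castSucc_eq.mpr hkL
          have hij : i ≠ j := fun h => hkJ (by rw [h])
          rw [if_neg (show ¬(i.castSucc = Fin.last m ∨ i.castSucc = j.castSucc) by
            simp [hkL, hkJ]), if_neg hkL, if_neg hkJ, Finset.mem_Icc]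
          have hc := hcond i hij
          by_cases hij' : i < j
          · rw [if_pos hij'] at hc
            have hcc : ((i.castSucc : Fin (m + 1)) : ℕ) < (j : ℕ) := by
              rw [Fin.coe_castSucc]; exact hij'
            have hoff : offM m d j i.castSucc (v j.castSucc)
                = (d i.castSucc * v j.castSucc) / (d j.castSucc) := by
              rw [offM, if_pos hcc]
            rw [hoff]
            set F := (d i.castSucc * v j.castSucc) / (d j.castSucc) with hF
            have key := Int.mul_ediv_add_emod (d i.castSucc * v j.castSucc) (d j.castSucc)
            have hr0 := Int.emod_nonneg (d i.castSucc * v j.castSucc) hDne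
            have hrlt := Int.emod_lt_of_pos (d i.castSucc * v j.castSucc) hDpos
            have h1 : F < v i.castSucc := by
              have : d j.castSucc * F < d j.castSucc * v i.castSucc := by linarith [hc.1]
              exact lt_of_mul_lt_mul_left this hDpos.le
            have h2 : v i.castSucc - a i.castSucc < F + 1 := by
              have : d j.castSucc * (v i.castSucc - a i.castSucc)
                  < d j.castSucc * (F + 1) := by linarith [hc.2]
              exact lt_of_mul_lt_mul_left this hDpos.le
            omega
          · rw [if_neg hij'] at hc
            have hcc : ¬ ((i.castSucc : Fin (m + 1)) : ℕ) < (j : ℕ) := by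
              rw [Fin.coe_castSucc]; exact hij'
            have hoff : offM m d j i.castSucc (v j.castSucc)
                = -((-(d i.castSucc * v j.castSucc)) / (d j.castSucc)) - 1 := by
              rw [offM, if_neg hcc]
            rw [hoff]
            set F := (-(d i.castSucc * v j.castSucc)) / (d j.castSucc) with hF
            have key := Int.mul_ediv_add_emod (-(d i.castSucc * v j.castSucc)) (d j.castSucc)
            have hr0 := Int.emod_nonneg (-(d i.castSucc * v j.castSucc)) hDne
            have hrlt := Int.emod_lt_of_pos (-(d i.castSucc * v j.castSucc)) hDpos
            have h1 : -v i.castSucc < F + 1 := by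
              have : d j.castSucc * (-v i.castSucc) < d j.castSucc * (F + 1) := by
                linarith [hc.1]
              exact lt_of_mul_lt_mul_left this hDpos.le
            have h2 : v i.castSucc + F < a i.castSucc := by
              have : d j.castSucc * (v i.castSucc + F) < d j.castSucc * a i.castSucc := by
                linarith [hc.2]
              exact lt_of_mul_lt_mul_left this hDpos.le
            omega
    · funext k
      by_cases hk : k = Fin.last m ∨ k = j.castSucc
      · simp only [phiM, if_pos hk]
      · simp only [phiM, if_neg hk, or_true, ite_true]
        ring

lemma card_boxM (m : ℕ) (a d : Fin (m + 1) → ℤ) (j : Fin m) :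
    (boxM m a d j).card = (d (Fin.last m)).toNat *
      ((d j.castSucc).toNat * ∏ i ∈ Finset.univ.erase j, (a i.castSucc).toNat) := by
  rw [boxM, Fintype.card_piFinset, Fin.prod_univ_castSucc]
  have hlast : (if Fin.last m = Fin.last m then
      Finset.Icc (a (Fin.last m) - d (Fin.last m) + 1) (a (Fin.last m))
      else if Fin.last m = j.castSucc then Finset.Icc (1 - d (Fin.last m)) 0
      else Finset.Icc 1 (a (Fin.last m))).card = (d (Fin.last m)).toNat := by
    rw [if_pos rfl, Int.card_Icc]
    congr 1; ring
  have hfac : ∀ i : Fin m, (if i.castSucc = Fin.last m then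
      Finset.Icc (a i.castSucc - d i.castSucc + 1) (a i.castSucc)
      else if i.castSucc = j.castSucc then Finset.Icc (1 - d i.castSucc) 0
      else Finset.Icc 1 (a i.castSucc)).card
      = (if i = j then (d j.castSucc).toNat else (a i.castSucc).toNat) := by
    intro i
    rw [if_neg (Fin.castSucc_lt_last i).ne]
    by_cases hij : i = j
    · subst hij
      rw [if_pos rfl, if_pos rfl, Int.card_Icc]
      congr 1; ring
    · rw [if_neg (fun h => hij (Fin.castSucc_injective m h)), if_neg hij, Int.card_Icc]
      congr 1; ring
  rw [hlast, Finset.prod_congr rfl (fun i _ => hfac i),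
    ← Finset.mul_prod_erase Finset.univ _ (Finset.mem_univ j), if_pos rfl,
    Finset.prod_congr rfl (fun i hi => if_neg (Finset.ne_of_mem_erase hi))]
  ring


theorem stmt10 (m : ℕ) (hm : 2 ≤ m) (a d : Fin (m + 1) → ℤ)
    (ha : ∀ i, 0 < a i) (hd : ∀ i, 0 < d i) :
    ((setM m a d).ncard : ℤ) =
      d (Fin.last m) *
        ∑ j : Fin m, d j.castSucc * ∏ i ∈ Finset.univ.erase j, a i.castSucc := by
  classical
  have hset : setM m a d =
      (↑((Finset.univ : Finset (Fin m)).biUnion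
        fun j => (boxM m a d j).image (phiM m d j)) : Set (Fin (m + 1) → ℤ)) := by
    ext v
    simp only [Finset.coe_biUnion, Set.mem_iUnion, Finset.mem_coe, Finset.mem_univ,
      Set.iUnion_true]
    rw [setM_iff_good m a d ha hd v]
    constructor
    · rintro ⟨j, hj⟩
      exact ⟨j, (mem_SBM m a d ha hd j v).mpr hj⟩
    · rintro ⟨j, hj⟩
      exact ⟨j, (mem_SBM m a d ha hd j v).mp hj⟩
  have hdisj : ∀ x ∈ (Finset.univ : Finset (Fin m)), ∀ y ∈ Finset.univ, x ≠ y →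
      Disjoint ((boxM m a d x).image (phiM m d x)) ((boxM m a d y).image (phiM m d y)) := by
    intro x _ y _ hxy
    rw [Finset.disjoint_left]
    intro v hvx hvy
    exact hxy (goodM_unique m a d ((mem_SBM m a d ha hd x v).mp hvx)
      ((mem_SBM m a d ha hd y v).mp hvy))
  rw [hset, Set.ncard_coe_finset, Finset.card_biUnion hdisj]
  have hcard : ∀ j : Fin m, ((boxM m a d j).image (phiM m d j)).card
      = (d (Fin.last m)).toNat *
        ((d j.castSucc).toNat * ∏ i ∈ Finset.univ.erase j, (a i.castSucc).toNat) := by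
    intro j
    rw [Finset.card_image_of_injective _ (phiM_inj m d j), card_boxM m a d j]
  rw [Finset.sum_congr rfl (fun j _ => hcard j)]
  have hA : ∀ i : Fin (m + 1), ((a i).toNat : ℤ) = a i :=
    fun i => Int.toNat_of_nonneg (ha i).le
  have hD : ∀ i : Fin (m + 1), ((d i).toNat : ℤ) = d i :=
    fun i => Int.toNat_of_nonneg (hd i).le
  push_cast
  simp only [hA, hD]
  rw [Finset.mul_sum]
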